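/- Let t, r be real with r > 0 and t > -log r. Then for every even positive integer n, Σ_{k=2}^{n+1} (-1)^k (k-1)!/(r(t+log r)^k) < ∫_r^∞ dx/(x^2(t+log x)^2) < Σ_{k=2}^{n} (-1)^k (k-1)!/(r(t+log r)^k). In particular, 1/(r(t+log r)^2) - 2/(r(t+log r)^3) < ∫_r^∞ dx/(x^2(t+log x)^2) < 1/(r(t+log r)^2). -/

import Mathlib

open Real Filter MeasureTheory Finset Set

section Aux
variable {t r : ℝ} (hr : 0 < r) (ht : 0 < t + Real.log r)

include hr ht in
lemma aux_pos {x : ℝ} (hx : r ≤ x) : 0 < x ∧ 0 < t + Real.log x := by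
  refine ⟨lt_of_lt_of_le hr hx, ?_⟩
  have := Real.log_le_log hr hx
  linarith

include hr ht in
lemma aux_cont (m : ℕ) :
    ContinuousOn (fun x : ℝ => 1 / (x^2 * (t + Real.log x)^m)) (Ici r) := by
  intro x hx
  obtain ⟨hx0, hl0⟩ := aux_pos hr ht hx
  refine ContinuousAt.continuousWithinAt ?_
  have hc : ContinuousAt (fun x : ℝ => x^2 * (t + Real.log x)^m) x :=
    (continuousAt_pow _ 2).mul ((continuousAt_const.add (Real.continuousAt_log hx0.ne')).pow m)
  exact continuousAt_const.div hc (by positivity)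

end Aux
section Aux2
variable {t r : ℝ} (hr : 0 < r) (ht : 0 < t + Real.log r)

include hr ht in
lemma aux_int (m : ℕ) :
    IntegrableOn (fun x : ℝ => 1 / (x^2 * (t + Real.log x)^m)) (Ioi r) := by
  have hbase : IntegrableOn (fun x : ℝ => ((t + Real.log r)^m)⁻¹ * x ^ (-2 : ℝ)) (Ioi r) :=
    (integrableOn_Ioi_rpow_of_lt (by norm_num) hr).const_mul _
  refine hbase.integrable.mono ?_ ?_
  · exact ((aux_cont hr ht m).mono Ioi_subset_Ici_self).aestronglyMeasurable measurableSet_Ioi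
  · filter_upwards [ae_restrict_mem measurableSet_Ioi] with x hx
    obtain ⟨hx0, hl0⟩ := aux_pos hr ht (le_of_lt hx)
    have hle : (t + Real.log r)^m ≤ (t + Real.log x)^m := by
      apply pow_le_pow_left₀ ht.le
      have := Real.log_le_log hr (le_of_lt hx)
      linarith
    rw [Real.norm_eq_abs, Real.norm_eq_abs, abs_of_nonneg (by positivity),
      abs_of_nonneg (by positivity)]
    rw [Real.rpow_neg hx0.le]
    have h2 : x ^ (2:ℝ) = x ^ (2:ℕ) := Real.rpow_natCast x 2
    rw [h2]
    rw [one_div, mul_inv, mul_comm]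
    exact mul_le_mul_of_nonneg_right (inv_anti₀ (by positivity) hle) (by positivity)
end Aux2
section Aux3
variable {t r : ℝ} (hr : 0 < r) (ht : 0 < t + Real.log r)

include hr ht in
lemma aux_intpos (m : ℕ) :
    0 < ∫ x in Ioi r, 1 / (x^2 * (t + Real.log x)^m) := by
  rw [setIntegral_pos_iff_support_of_nonneg_ae ?_ (aux_int hr ht m)]
  · refine lt_of_lt_of_le ?_ (measure_mono (show Ioi r ⊆ _ ∩ Ioi r from fun x hx => ?_))
    · rw [Real.volume_Ioi]; exact ENNReal.zero_lt_top
    · obtain ⟨hx0, hl0⟩ := aux_pos hr ht (le_of_lt hx)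
      exact ⟨Function.mem_support.2 (ne_of_gt (by positivity)), hx⟩
  · filter_upwards [ae_restrict_mem measurableSet_Ioi] with x hx
    obtain ⟨hx0, hl0⟩ := aux_pos hr ht (le_of_lt hx)
    positivity

include hr ht in
lemma aux_ibp (m : ℕ) (hm : 1 ≤ m) :
    ∫ x in Ioi r, 1 / (x^2 * (t + Real.log x)^m)
      = 1 / (r * (t + Real.log r)^m)
        - m * ∫ x in Ioi r, 1 / (x^2 * (t + Real.log x)^(m+1)) := by
  obtain ⟨k, rfl⟩ : ∃ k, m = k + 1 := ⟨m - 1, (Nat.succ_pred_eq_of_pos hm).symm⟩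
  have key : ∫ x in Ioi r,
      (1 / (x^2 * (t + Real.log x)^(k+1)) + (k+1 : ℕ) * (1 / (x^2 * (t + Real.log x)^(k+1+1))))
      = 0 - (-(r * (t + Real.log r)^(k+1))⁻¹) := by
    apply integral_Ioi_of_hasDerivAt_of_tendsto'
      (f := fun x : ℝ => -(x * (t + Real.log x)^(k+1))⁻¹)
    · intro x hx
      obtain ⟨hx0, hl0⟩ := aux_pos hr ht hx
      have hd : HasDerivAt (fun x : ℝ => x * (t + Real.log x)^(k+1))
          ((t + Real.log x)^(k+1) + (k+1 : ℕ) * (t + Real.log x)^k) x := by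
        have h1 : HasDerivAt (fun x : ℝ => (t + Real.log x)^(k+1))
            ((k+1 : ℕ) * (t + Real.log x)^k * (1/x)) x :=
          (((Real.hasDerivAt_log hx0.ne').const_add t).pow (k+1)).congr_deriv (by
            simp only [Nat.add_sub_cancel]; ring)
        have h2 := (hasDerivAt_id x).mul h1
        refine h2.congr_deriv ?_
        field_simp
        simp only [id_eq]
        ring
      have hne : x * (t + Real.log x)^(k+1) ≠ 0 := by positivity
      have h3 := (hd.inv hne).neg
      refine h3.congr_deriv ?_
      rw [neg_div, neg_neg]
      have hl0' : (0:ℝ) < t + Real.log x := hl0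
      field_simp
      ring
    · exact (aux_int hr ht (k+1)).add ((aux_int hr ht (k+1+1)).const_mul _)
    · rw [show (0:ℝ) = -0 by norm_num]
      apply Tendsto.neg
      apply Tendsto.inv_tendsto_atTop
      apply tendsto_atTop_mono' atTop ?_ (tendsto_id.atTop_mul_const (pow_pos ht (k+1)))
      filter_upwards [Ioi_mem_atTop r] with x hx
      obtain ⟨hx0, hl0⟩ := aux_pos hr ht (le_of_lt hx)
      have : (t + Real.log r)^(k+1) ≤ (t + Real.log x)^(k+1) := by
        apply pow_le_pow_left₀ ht.le
        have := Real.log_le_log hr (le_of_lt hx)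
        linarith
      exact mul_le_mul_of_nonneg_left this hx0.le
  rw [integral_add (aux_int hr ht (k+1)) ((aux_int hr ht (k+1+1)).const_mul _),
    integral_const_mul, zero_sub, neg_neg] at key
  simp only [one_div] at key ⊢
  linarith
end Aux3
section Aux4
variable {t r : ℝ} (hr : 0 < r) (ht : 0 < t + Real.log r)

include hr ht in
lemma aux_main (m : ℕ) (hm : 1 ≤ m) :
    (∫ x in Ioi r, 1 / (x^2 * (t + Real.log x)^2))
      = (∑ k ∈ Finset.Icc 2 m, (-1:ℝ)^k * (Nat.factorial (k-1)) / (r * (t + Real.log r)^k))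
        + (-1:ℝ)^(m+1) * (Nat.factorial m) *
          ∫ x in Ioi r, 1 / (x^2 * (t + Real.log x)^(m+1)) := by
  induction m, hm using Nat.le_induction with
  | base =>
    rw [show Finset.Icc 2 1 = (∅ : Finset ℕ) from rfl]
    norm_num [Nat.factorial]
  | succ m hm ih =>
    rw [ih, aux_ibp hr ht (m+1) (by omega), Finset.sum_Icc_succ_top (by omega : 2 ≤ m+1)]
    have hfac : (Nat.factorial (m+1) : ℝ) = (m+1) * Nat.factorial m := by
      rw [Nat.factorial_succ]; push_cast; ring
    simp only [Nat.add_sub_cancel, hfac]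
    push_cast
    ring
end Aux4
theorem stmt_7 (t r : ℝ) (hr : 0 < r) (ht : -Real.log r < t)
    (n : ℕ) (hn : 0 < n) (hev : Even n) :
    (∑ k ∈ Finset.Icc 2 (n + 1),
        (-1 : ℝ)^k * (Nat.factorial (k - 1)) / (r * (t + Real.log r)^k)) <
      (∫ x in Set.Ioi r, 1 / (x^2 * (t + Real.log x)^2)) ∧
    (∫ x in Set.Ioi r, 1 / (x^2 * (t + Real.log x)^2)) <
      (∑ k ∈ Finset.Icc 2 n,
        (-1 : ℝ)^k * (Nat.factorial (k - 1)) / (r * (t + Real.log r)^k)) ∧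
    1 / (r * (t + Real.log r)^2) - 2 / (r * (t + Real.log r)^3) <
      (∫ x in Set.Ioi r, 1 / (x^2 * (t + Real.log x)^2)) ∧
    (∫ x in Set.Ioi r, 1 / (x^2 * (t + Real.log x)^2)) < 1 / (r * (t + Real.log r)^2) := by
  have ht' : 0 < t + Real.log r := by linarith
  have hpos : ∀ m : ℕ, 0 < ∫ x in Set.Ioi r, 1 / (x^2 * (t + Real.log x)^m) :=
    fun m => aux_intpos hr ht' m
  have hne1 : ((-1:ℝ))^(n+1) = -1 := Odd.neg_one_pow (Even.add_one hev)
  have hne2 : ((-1:ℝ))^(n+2) = 1 := Even.neg_one_pow (hev.add even_two)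
  have eqn := aux_main hr ht' n hn
  have eqn1 := aux_main hr ht' (n+1) (by omega)
  have eq2 := aux_main hr ht' 2 (by omega)
  have eq3 := aux_main hr ht' 3 (by omega)
  rw [hne1] at eqn
  rw [show n+1+1 = n+2 from rfl, hne2] at eqn1
  have hfn : (0:ℝ) < Nat.factorial n := by positivity
  have hfn1 : (0:ℝ) < Nat.factorial (n+1) := by positivity
  have hS2 : (∑ k ∈ Finset.Icc 2 2,
      (-1 : ℝ)^k * (Nat.factorial (k - 1)) / (r * (t + Real.log r)^k))
      = 1 / (r * (t + Real.log r)^2) := by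
    rw [Finset.Icc_self, Finset.sum_singleton]; norm_num [Nat.factorial]
  have hS3 : (∑ k ∈ Finset.Icc 2 3,
      (-1 : ℝ)^k * (Nat.factorial (k - 1)) / (r * (t + Real.log r)^k))
      = 1 / (r * (t + Real.log r)^2) - 2 / (r * (t + Real.log r)^3) := by
    rw [show Finset.Icc 2 3 = {2, 3} from rfl, Finset.sum_insert (by decide),
      Finset.sum_singleton]
    norm_num [Nat.factorial]
    ring
  refine ⟨?_, ?_, ?_, ?_⟩
  · nlinarith [hpos (n+2), mul_pos hfn1 (hpos (n+2))]
  · nlinarith [hpos (n+1), mul_pos hfn (hpos (n+1))]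
  · rw [← hS3]
    have h6 : ((-1:ℝ))^(3+1) * (Nat.factorial 3 : ℝ) = 6 := by norm_num [Nat.factorial]
    rw [h6] at eq3
    linarith [hpos (3+1)]
  · rw [← hS2]
    have h2' : ((-1:ℝ))^(2+1) * (Nat.factorial 2 : ℝ) = -2 := by norm_num [Nat.factorial]
    rw [h2'] at eq2
    linarith [hpos (2+1)]
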